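/- With the setup of the previous statement (edges ordered so that each vertex's incident edges form a consecutive interval, blocks E_s consecutive of size ≥ α, each part/vertex containing at least one centre and at most 2ρ centres), let G_s be the union of the centres of all vertices incident to an edge of E_s. Then α − 1 ≤ |G_s| ≤ 8ρα for each block E_s of size at most 2α. -/

import Mathlib

open SimpleGraph

private lemma forest_dist_ne {V : Type*} [DecidableEq V] {H : SimpleGraph V} (hH : H.IsAcyclic)
    {u v r : V} (huv : H.Adj u v) (hur : H.Reachable u r) :
    H.dist u r ≠ H.dist v r := by
  intro heq
  have hvr : H.Reachable v r := huv.symm.reachable.trans hur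
  obtain ⟨p, hp, hpl⟩ := hur.exists_path_of_dist
  obtain ⟨q, hq, hql⟩ := hvr.exists_path_of_dist
  have hu : u ∉ q.support := by
    intro hu
    have h1 : H.dist u r ≤ (q.dropUntil u hu).length := SimpleGraph.dist_le _
    have h2 : (q.takeUntil u hu).length + (q.dropUntil u hu).length = q.length := by
      have h2' := congrArg SimpleGraph.Walk.length (q.take_spec hu)
      rwa [SimpleGraph.Walk.length_append] at h2'
    have h3 : H.dist v u ≤ (q.takeUntil u hu).length := SimpleGraph.dist_le _
    have h4 : 0 < H.dist v u := (huv.symm.reachable).pos_dist_of_ne huv.ne'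
    omega
  have hp' : (SimpleGraph.Walk.cons huv q).IsPath := hq.cons hu
  have hPeq := hH.path_unique ⟨p, hp⟩ ⟨SimpleGraph.Walk.cons huv q, hp'⟩
  have hl := congrArg (fun w : H.Path u r => w.1.length) hPeq
  simp only [SimpleGraph.Walk.length_cons] at hl
  omega

/-- Let `G` be a forest whose vertices are parts: pairwise disjoint nonempty sets of
at most `2ρ` centres.  If `E_s` is a set of between `α` and `2α` edges of `G` and
`G_s` is the union of the parts of all vertices incident to an edge of `E_s`, then
`α − 1 ≤ |G_s| ≤ 8ρα`. -/
theorem stmt_6 {V C : Type*} [DecidableEq C]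
    (G : SimpleGraph V) (hG : G.IsAcyclic)
    (Es : Set (Sym2 V)) (hEs : Es ⊆ G.edgeSet)
    (α ρ : ℕ) (hcardlo : α ≤ Es.ncard) (hcardhi : Es.ncard ≤ 2 * α)
    (part : V → Finset C)
    (hdisj : ∀ u v, u ≠ v → Disjoint (part u) (part v))
    (hne : ∀ v, (part v).Nonempty)
    (hsize : ∀ v, (part v).card ≤ 2 * ρ)
    (Gs : Finset C)
    (hGs : ∀ c, c ∈ Gs ↔ ∃ v, (∃ ed ∈ Es, v ∈ ed) ∧ c ∈ part v) :
    α - 1 ≤ Gs.card ∧ Gs.card ≤ 8 * ρ * α := by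
  classical
  set T : Set V := {v | ∃ ed ∈ Es, v ∈ ed} with hTdef
  set g : V → C := fun v => (hne v).choose with hgdef
  have hginj : Function.Injective g := by
    intro u v h
    by_contra hne'
    have h1 : g u ∈ part u := (hne u).choose_spec
    have h2 : g v ∈ part v := (hne v).choose_spec
    rw [h] at h1
    exact (Finset.disjoint_left.mp (hdisj u v hne')) h1 h2
  have hgmem : ∀ v ∈ T, g v ∈ Gs := fun v hv => (hGs _).2 ⟨v, hv, (hne v).choose_spec⟩
  -- T is finite
  have hTfin : T.Finite := by
    have hsub : T ⊆ g ⁻¹' ↑Gs := fun v hv => hgmem v hv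
    exact (Gs.finite_toSet.preimage hginj.injOn).subset hsub
  -- Es is finite
  have hEsfin : Es.Finite := by
    have hsub : Es ⊆ Sym2.mk.uncurry '' ((T ×ˢ T) : Set (V × V)) := by
      intro e he
      induction e with
      | _ a b =>
        exact ⟨(a, b), ⟨⟨s(a, b), he, by simp⟩, ⟨s(a, b), he, by simp⟩⟩, rfl⟩
    exact ((hTfin.prod hTfin).image _).subset hsub
  -- |T| ≤ |Gs|
  have hTle : T.ncard ≤ Gs.card := by
    have h1 : (g '' T).ncard ≤ (↑Gs : Set C).ncard :=
      Set.ncard_le_ncard (by rintro _ ⟨v, hv, rfl⟩; exact hgmem v hv) Gs.finite_toSet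
    rwa [Set.ncard_image_of_injective _ hginj, Set.ncard_coe_finset] at h1
  -- the forest bound: |Es| ≤ |T|
  have hEsT : Es.ncard ≤ T.ncard := by
    set H := SimpleGraph.fromEdgeSet Es with hHdef
    have hHle : H ≤ G := by
      conv_rhs => rw [← SimpleGraph.fromEdgeSet_edgeSet (G := G)]
      exact SimpleGraph.fromEdgeSet_mono hEs
    have hH : H.IsAcyclic := fun v c hc => hG (c.mapLe hHle) (hc.mapLe hHle)
    have hadj : ∀ {a b : V}, s(a, b) ∈ Es → H.Adj a b := by
      intro a b hab
      exact (SimpleGraph.fromEdgeSet_adj _).2 ⟨hab, ((SimpleGraph.mem_edgeSet G).1 (hEs hab)).ne⟩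
    set rt : V → V := fun v => Quot.out (H.connectedComponentMk v) with hrtdef
    have hreach : ∀ v, H.Reachable v (rt v) :=
      fun v => SimpleGraph.ConnectedComponent.exact (Quot.out_eq _).symm
    have hrt_adj : ∀ {a b : V}, H.Adj a b → rt a = rt b := by
      intro a b hab
      simp only [hrtdef]
      rw [SimpleGraph.ConnectedComponent.sound hab.reachable]
    -- choose the far endpoint of each edge
    have hchoice : ∀ e : Sym2 V, ∃ x y : V, e = s(x, y) ∧
        (e ∈ Es → H.dist y (rt x) ≤ H.dist x (rt x)) := by
      intro e
      induction e with
      | _ a b =>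
        by_cases h : H.dist b (rt a) ≤ H.dist a (rt a)
        · exact ⟨a, b, rfl, fun _ => h⟩
        · refine ⟨b, a, Sym2.eq_swap, fun he' => ?_⟩
          rw [← hrt_adj (hadj he')]
          omega
    choose x y hxy hle using hchoice
    have hinj : Set.InjOn x Es := by
      intro e1 he1 e2 he2 hx
      set x0 := x e1 with hx0
      set r := rt x0 with hr
      have hx2 : x e2 = x0 := hx.symm
      have he1' : e1 = s(x0, y e1) := hxy e1
      have he2' : e2 = s(x0, y e2) := by rw [← hx2]; exact hxy e2
      have hadj1 : H.Adj x0 (y e1) := hadj (he1' ▸ he1)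
      have hadj2 : H.Adj x0 (y e2) := hadj (he2' ▸ he2)
      have hxr : H.Reachable x0 r := hreach x0
      have hlt1 : H.dist (y e1) r < H.dist x0 r :=
        lt_of_le_of_ne (hle e1 he1) (fun h => forest_dist_ne hH hadj1 hxr h.symm)
      have hlt2 : H.dist (y e2) r < H.dist x0 r := by
        have := hle e2 he2
        rw [hx2] at this
        exact lt_of_le_of_ne this (fun h => forest_dist_ne hH hadj2 hxr h.symm)
      -- shortest paths from y e1, y e2 to the root
      obtain ⟨q1, hq1, hql1⟩ := (hadj1.symm.reachable.trans hxr).exists_path_of_dist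
      obtain ⟨q2, hq2, hql2⟩ := (hadj2.symm.reachable.trans hxr).exists_path_of_dist
      have hnot1 : x0 ∉ q1.support := by
        intro hmem
        have h1 : H.dist x0 r ≤ (q1.dropUntil x0 hmem).length := SimpleGraph.dist_le _
        have h2 : (q1.dropUntil x0 hmem).length ≤ q1.length := by
          have := congrArg SimpleGraph.Walk.length (q1.take_spec hmem)
          simp only [SimpleGraph.Walk.length_append] at this
          omega
        omega
      have hnot2 : x0 ∉ q2.support := by
        intro hmem
        have h1 : H.dist x0 r ≤ (q2.dropUntil x0 hmem).length := SimpleGraph.dist_le _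
        have h2 : (q2.dropUntil x0 hmem).length ≤ q2.length := by
          have := congrArg SimpleGraph.Walk.length (q2.take_spec hmem)
          simp only [SimpleGraph.Walk.length_append] at this
          omega
        omega
      have hp1 : (SimpleGraph.Walk.cons hadj1 q1).IsPath := hq1.cons hnot1
      have hp2 : (SimpleGraph.Walk.cons hadj2 q2).IsPath := hq2.cons hnot2
      have hPeq := hH.path_unique ⟨SimpleGraph.Walk.cons hadj1 q1, hp1⟩
        ⟨SimpleGraph.Walk.cons hadj2 q2, hp2⟩
      have hsupp := congrArg (fun w : H.Path x0 r => w.1.support) hPeq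
      simp only [SimpleGraph.Walk.support_cons] at hsupp
      have hy : y e1 = y e2 := by
        rw [q1.support_eq_cons, q2.support_eq_cons] at hsupp
        simp only [List.cons.injEq] at hsupp
        exact hsupp.2.1
      rw [he1', he2', hy]
    have himg : x '' Es ⊆ T := by
      rintro _ ⟨e, he, rfl⟩
      refine ⟨e, he, ?_⟩
      have hmm : x e ∈ s(x e, y e) := Sym2.mem_mk_left _ _
      rwa [← hxy e] at hmm
    calc Es.ncard = (x '' Es).ncard := (Set.ncard_image_of_injOn hinj).symm
      _ ≤ T.ncard := Set.ncard_le_ncard himg hTfin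
  -- upper bound: |T| ≤ 2 |Es|
  have hT2 : T.ncard ≤ 2 * Es.ncard := by
    have hsub : hTfin.toFinset ⊆ hEsfin.toFinset.biUnion
        (fun e => {(Quot.out e).1, (Quot.out e).2}) := by
      intro v hv
      rw [Set.Finite.mem_toFinset] at hv
      obtain ⟨e, he, hve⟩ := hv
      refine Finset.mem_biUnion.2 ⟨e, Set.Finite.mem_toFinset _ |>.2 he, ?_⟩
      have h1 : v ∈ (Sym2.mk.uncurry (Quot.out e) : Sym2 V) := by
        rw [show (Sym2.mk.uncurry (Quot.out e) : Sym2 V) = e from Quot.out_eq e]; exact hve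
      rcases hq : Quot.out e with ⟨a, b⟩
      rw [hq] at h1
      rcases Sym2.mem_iff.1 h1 with rfl | rfl <;> simp
    have hcard := Finset.card_le_card hsub
    have hb := Finset.card_biUnion_le (s := hEsfin.toFinset)
      (t := fun e : Sym2 V => ({(Quot.out e).1, (Quot.out e).2} : Finset V))
    have hbound : ∀ e : Sym2 V,
        ({(Quot.out e).1, (Quot.out e).2} : Finset V).card ≤ 2 :=
      fun e => Finset.card_insert_le _ _ |>.trans (by simp)
    have hsum : (∑ e ∈ hEsfin.toFinset,
        ({(Quot.out e).1, (Quot.out e).2} : Finset V).card) ≤ 2 * hEsfin.toFinset.card := by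
      calc (∑ e ∈ hEsfin.toFinset, ({(Quot.out e).1, (Quot.out e).2} : Finset V).card)
          ≤ ∑ _e ∈ hEsfin.toFinset, 2 := Finset.sum_le_sum fun e _ => hbound e
        _ = 2 * hEsfin.toFinset.card := by rw [Finset.sum_const, smul_eq_mul, mul_comm]
    have hTc : T.ncard = hTfin.toFinset.card := Set.ncard_eq_toFinset_card T hTfin
    have hEc : Es.ncard = hEsfin.toFinset.card := Set.ncard_eq_toFinset_card Es hEsfin
    omega
  -- Gs is contained in the union of parts over T
  have hGsub : Gs ⊆ hTfin.toFinset.biUnion part := by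
    intro c hc
    obtain ⟨v, hv, hcv⟩ := (hGs c).1 hc
    exact Finset.mem_biUnion.2 ⟨v, Set.Finite.mem_toFinset _ |>.2 hv, hcv⟩
  have hGsle : Gs.card ≤ 2 * ρ * T.ncard := by
    calc Gs.card ≤ (hTfin.toFinset.biUnion part).card := Finset.card_le_card hGsub
      _ ≤ ∑ v ∈ hTfin.toFinset, (part v).card := Finset.card_biUnion_le
      _ ≤ ∑ _v ∈ hTfin.toFinset, 2 * ρ := Finset.sum_le_sum fun v _ => hsize v
      _ = 2 * ρ * T.ncard := by
          rw [Finset.sum_const, smul_eq_mul, mul_comm, Set.ncard_eq_toFinset_card T hTfin]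
  constructor
  · omega
  · calc Gs.card ≤ 2 * ρ * T.ncard := hGsle
      _ ≤ 2 * ρ * (2 * Es.ncard) := Nat.mul_le_mul_left _ hT2
      _ ≤ 2 * ρ * (2 * (2 * α)) := Nat.mul_le_mul_left _ (Nat.mul_le_mul_left _ hcardhi)
      _ = 8 * ρ * α := by ring
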